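/- arXiv:2506.13106 — 2 statements merged into one kernel-verified Lean document; each statement's English description precedes it below -/
import Mathlib

section
/- For a symmetric positive definite matrix P, vector q and scalar γ > 0, with K = P·q·(γ + qᵀPq)⁻¹ and P₊⁻¹ = γP⁻¹ + qqᵀ, the closed-loop matrix A = I − K·qᵀ satisfies, for any vector e: eᵀ·Aᵀ·P₊⁻¹·A·e = γ²·eᵀ·P⁻¹·P₊·P⁻¹·e ≤ γ·eᵀ·P⁻¹·e. -/
open Matrix

lemma mul_vecMulVec' {n : ℕ} (A : Matrix (Fin n) (Fin n) ℝ) (u v : Fin n → ℝ) :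
    A * Matrix.vecMulVec u v = Matrix.vecMulVec (A.mulVec u) v := by
  ext i j
  simp only [Matrix.mul_apply, Matrix.vecMulVec_apply, Matrix.mulVec, dotProduct,
    Finset.sum_mul]
  exact Finset.sum_congr rfl fun k _ => by ring

lemma vecMulVec_mulVec' {n : ℕ} (u v x : Fin n → ℝ) :
    (Matrix.vecMulVec u v).mulVec x = (v ⬝ᵥ x) • u := by
  ext i
  simp only [Matrix.mulVec, Matrix.vecMulVec_apply, dotProduct, Pi.smul_apply,
    smul_eq_mul, Finset.sum_mul]
  exact Finset.sum_congr rfl fun k _ => by ring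

lemma vecMulVec_smul' {n : ℕ} (c : ℝ) (u v : Fin n → ℝ) :
    Matrix.vecMulVec (c • u) v = c • Matrix.vecMulVec u v := by
  ext i j
  simp [Matrix.vecMulVec_apply, mul_assoc]

lemma vecMulVec_transpose' {n : ℕ} (q : Fin n → ℝ) :
    (Matrix.vecMulVec q q)ᵀ = Matrix.vecMulVec q q := by
  ext i j; simp [Matrix.vecMulVec_apply, mul_comm]

/-- The RLS update contracts the Lyapunov function `V = eᵀP⁻¹e` by the factor `γ`. -/
theorem rls_lyapunov_contraction
    {n : ℕ} (P Pplus A : Matrix (Fin n) (Fin n) ℝ) (q K : Fin n → ℝ) (γ : ℝ)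
    (hP : P.PosDef) (hPs : P.IsSymm) (hγ : 0 < γ)
    (hPplus : Pplus = (γ • P⁻¹ + Matrix.vecMulVec q q)⁻¹)
    (hK : K = (γ + q ⬝ᵥ P.mulVec q)⁻¹ • P.mulVec q)
    (hA : A = 1 - Matrix.vecMulVec K q) :
    ∀ e : Fin n → ℝ,
      e ⬝ᵥ (Aᵀ * Pplus⁻¹ * A).mulVec e
        = γ ^ 2 * (e ⬝ᵥ (P⁻¹ * Pplus * P⁻¹).mulVec e) ∧
      e ⬝ᵥ (Aᵀ * Pplus⁻¹ * A).mulVec e ≤ γ * (e ⬝ᵥ P⁻¹.mulVec e) := by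
  intro e
  set c : ℝ := γ + q ⬝ᵥ P.mulVec q with hc
  have hq0 : 0 ≤ q ⬝ᵥ P.mulVec q := by simpa using hP.posSemidef.dotProduct_mulVec_nonneg q
  have hcpos : 0 < c := by positivity
  have hcne : c ≠ 0 := hcpos.ne'
  set M : Matrix (Fin n) (Fin n) ℝ := γ • P⁻¹ + Matrix.vecMulVec q q with hM
  -- M is positive definite
  have hqq_psd : (Matrix.vecMulVec q q).PosSemidef := by
    refine Matrix.PosSemidef.of_dotProduct_mulVec_nonneg ?_ ?_
    · ext i j
      simp [Matrix.conjTranspose, Matrix.vecMulVec_apply, mul_comm]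
    · intro x
      rw [vecMulVec_mulVec']
      simp only [dotProduct_smul, smul_eq_mul, star_trivial]
      rw [dotProduct_comm q x]
      exact mul_self_nonneg _
  have hPinv : (P⁻¹).PosDef := hP.inv
  have hPinvT : (P⁻¹)ᵀ = P⁻¹ := by
    rw [Matrix.transpose_nonsing_inv, hPs.eq]
  have hsmul : (γ • P⁻¹).PosDef := by
    refine Matrix.PosDef.of_dotProduct_mulVec_pos ?_ ?_
    · show (γ • P⁻¹)ᴴ = _
      rw [Matrix.conjTranspose_smul, star_trivial, hPinv.isHermitian.eq]
    · intro x hx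
      rw [Matrix.smul_mulVec, dotProduct_smul]
      exact mul_pos hγ (hPinv.dotProduct_mulVec_pos hx)
  have hMpd : M.PosDef := hsmul.add_posSemidef hqq_psd
  have hPdet : IsUnit P.det := hP.det_pos.ne'.isUnit
  have hMdet : IsUnit M.det := hMpd.det_pos.ne'.isUnit
  have hPinvP : P⁻¹ * P = 1 := Matrix.nonsing_inv_mul P hPdet
  have hPplusInv : Pplus⁻¹ = M := by
    rw [hPplus, Matrix.nonsing_inv_nonsing_inv _ hMdet]
  have hMT : Mᵀ = M := by
    rw [hM, Matrix.transpose_add, Matrix.transpose_smul, hPinvT, vecMulVec_transpose']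
  -- key: M * A = γ • P⁻¹
  have hMq : M.mulVec (P.mulVec q) = c • q := by
    rw [hM, Matrix.add_mulVec, Matrix.smul_mulVec, Matrix.mulVec_mulVec, hPinvP,
      Matrix.one_mulVec, vecMulVec_mulVec', hc]
    ext i; simp [Pi.smul_apply]; ring
  have hMA : M * A = γ • P⁻¹ := by
    rw [hA, Matrix.mul_sub, Matrix.mul_one, hK, _root_.vecMulVec_smul', Matrix.mul_smul,
      mul_vecMulVec', hMq, _root_.vecMulVec_smul', smul_smul, inv_mul_cancel₀ hcne, one_smul, hM]
    abel
  have hATM : Aᵀ * M = γ • P⁻¹ := by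
    have h := congrArg Matrix.transpose hMA
    rw [Matrix.transpose_mul, hMT, Matrix.transpose_smul, hPinvT] at h
    exact h
  -- P⁻¹ * A computed two ways
  have hPinvK : P⁻¹.mulVec K = c⁻¹ • q := by
    rw [hK, Matrix.mulVec_smul, Matrix.mulVec_mulVec, hPinvP, Matrix.one_mulVec]
  have hPinvA : P⁻¹ * A = P⁻¹ - c⁻¹ • Matrix.vecMulVec q q := by
    rw [hA, Matrix.mul_sub, Matrix.mul_one, mul_vecMulVec', hPinvK, _root_.vecMulVec_smul']
  have hAeq : A = M⁻¹ * (γ • P⁻¹) := by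
    rw [← hMA, ← Matrix.mul_assoc, Matrix.nonsing_inv_mul _ hMdet, Matrix.one_mul]
  have hfull : Aᵀ * Pplus⁻¹ * A = γ • (P⁻¹ * A) := by
    rw [hPplusInv, hATM, Matrix.smul_mul]
  have hfull2 : Aᵀ * Pplus⁻¹ * A = (γ ^ 2) • (P⁻¹ * Pplus * P⁻¹) := by
    rw [hfull, hAeq, hPplus, Matrix.mul_smul, Matrix.mul_smul, smul_smul, ← Matrix.mul_assoc, sq]
  constructor
  · rw [hfull2, Matrix.smul_mulVec, dotProduct_smul, smul_eq_mul]
  · rw [hfull, Matrix.smul_mulVec, dotProduct_smul, smul_eq_mul, hPinvA]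
    have hexp : e ⬝ᵥ (P⁻¹ - c⁻¹ • Matrix.vecMulVec q q).mulVec e
        = e ⬝ᵥ P⁻¹.mulVec e - c⁻¹ * (q ⬝ᵥ e) ^ 2 := by
      rw [Matrix.sub_mulVec, dotProduct_sub, Matrix.smul_mulVec,
        dotProduct_smul, vecMulVec_mulVec', dotProduct_smul]
      have : e ⬝ᵥ q = q ⬝ᵥ e := dotProduct_comm e q
      simp [this, smul_eq_mul, sq]
    rw [hexp]
    have hnn : 0 ≤ c⁻¹ * (q ⬝ᵥ e) ^ 2 := by positivity
    nlinarith
end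

section
/- If P₊⁻¹ = γ·P⁻¹ + q·qᵀ with P symmetric positive definite, q a vector and 0 < γ, then P₊ is symmetric positive definite and P₊ ⪯ γ⁻¹·P (in the Loewner order). -/
open Matrix

lemma sym_dot {n : ℕ} {A : Matrix (Fin n) (Fin n) ℝ} (hA : A.IsHermitian)
    (u v : Fin n → ℝ) : u ⬝ᵥ (A *ᵥ v) = (A *ᵥ u) ⬝ᵥ v := by
  rw [dotProduct_mulVec, ← mulVec_transpose]
  congr 1
  rw [← Matrix.conjTranspose_eq_transpose_of_trivial, hA]

lemma inv_sub_inv_posSemidef {n : ℕ} {A B : Matrix (Fin n) (Fin n) ℝ}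
    (hA : A.PosDef) (hB : B.PosDef) (h : (B - A).PosSemidef) :
    (A⁻¹ - B⁻¹).PosSemidef := by
  refine PosSemidef.of_dotProduct_mulVec_nonneg (hA.inv.isHermitian.sub hB.inv.isHermitian) fun x => ?_
  simp only [star_trivial]
  set y := B⁻¹ *ᵥ x with hy
  set z := A⁻¹ *ᵥ x - y with hz
  have hAx : A *ᵥ (A⁻¹ *ᵥ x) = x := by
    rw [mulVec_mulVec, Matrix.mul_nonsing_inv _ hA.det_pos.ne'.isUnit, one_mulVec]
  have hBy : B *ᵥ y = x := by
    rw [hy, mulVec_mulVec, Matrix.mul_nonsing_inv _ hB.det_pos.ne'.isUnit, one_mulVec]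
  have h1 : 0 ≤ z ⬝ᵥ (A *ᵥ z) := by simpa only [star_trivial] using hA.posSemidef.dotProduct_mulVec_nonneg z
  have h2 : 0 ≤ y ⬝ᵥ ((B - A) *ᵥ y) := by simpa only [star_trivial] using h.dotProduct_mulVec_nonneg y
  have key : x ⬝ᵥ ((A⁻¹ - B⁻¹) *ᵥ x) = z ⬝ᵥ (A *ᵥ z) + y ⬝ᵥ ((B - A) *ᵥ y) := by
    have e1 : z ⬝ᵥ (A *ᵥ z) =
        x ⬝ᵥ (A⁻¹ *ᵥ x) - x ⬝ᵥ y - y ⬝ᵥ x + y ⬝ᵥ (A *ᵥ y) := by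
      rw [hz, mulVec_sub, dotProduct_sub, sub_dotProduct, sub_dotProduct]
      have t1 : (A⁻¹ *ᵥ x) ⬝ᵥ (A *ᵥ (A⁻¹ *ᵥ x)) = x ⬝ᵥ (A⁻¹ *ᵥ x) := by
        rw [hAx, dotProduct_comm]
      have t2 : (A⁻¹ *ᵥ x) ⬝ᵥ (A *ᵥ y) = x ⬝ᵥ y := by
        rw [sym_dot hA.isHermitian, hAx]
      have t3 : y ⬝ᵥ (A *ᵥ (A⁻¹ *ᵥ x)) = y ⬝ᵥ x := by rw [hAx]
      rw [t1, t2, t3]; ring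
    have e2 : y ⬝ᵥ ((B - A) *ᵥ y) = y ⬝ᵥ x - y ⬝ᵥ (A *ᵥ y) := by
      rw [sub_mulVec, dotProduct_sub, hBy]
    rw [e1, e2, sub_mulVec, dotProduct_sub]
    have : x ⬝ᵥ y = y ⬝ᵥ x := dotProduct_comm x y
    rw [← hy]
    linarith [this]
  rw [key]; positivity

/-- The RLS covariance update preserves positive definiteness and
`P₊ ⪯ γ⁻¹·P` in the Loewner order. -/
theorem rls_covariance_update_loewner
    {n : ℕ} (P Pplus : Matrix (Fin n) (Fin n) ℝ) (q : Fin n → ℝ) (γ : ℝ)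
    (hP : P.PosDef) (hPs : P.IsSymm) (hγ : 0 < γ)
    (hPplus : Pplus = (γ • P⁻¹ + Matrix.vecMulVec q q)⁻¹) :
    Pplus.PosDef ∧ Pplus.IsSymm ∧ (γ⁻¹ • P - Pplus).PosSemidef := by
  have hPinv : (P⁻¹).PosDef := hP.inv
  -- γ • P⁻¹ is posdef
  have hS : (γ • P⁻¹ : Matrix (Fin n) (Fin n) ℝ).PosDef := by
    refine PosDef.of_dotProduct_mulVec_pos ?_ fun x hx => ?_
    · unfold Matrix.IsHermitian
      rw [conjTranspose_smul, hPinv.isHermitian.eq, star_trivial]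
    · simp only [smul_mulVec, dotProduct_smul, star_trivial, smul_eq_mul]
      exact mul_pos hγ (by simpa using hPinv.dotProduct_mulVec_pos hx)
  -- qqᵀ is psd
  have hq : (Matrix.vecMulVec q q).PosSemidef := by
    refine PosSemidef.of_dotProduct_mulVec_nonneg ?_ fun x => ?_
    · unfold Matrix.IsHermitian
      ext i j
      simp [vecMulVec_apply, mul_comm]
    · have : Matrix.vecMulVec q q *ᵥ x = (q ⬝ᵥ x) • q := by
        ext i
        simp only [mulVec, vecMulVec_apply, dotProduct, Pi.smul_apply, smul_eq_mul,
          Finset.sum_mul]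
        exact Finset.sum_congr rfl fun j _ => by ring
      rw [this]
      simp only [star_trivial, dotProduct_smul, smul_eq_mul]
      rw [dotProduct_comm x q]
      exact mul_self_nonneg _
  have hM : (γ • P⁻¹ + Matrix.vecMulVec q q).PosDef := hS.add_posSemidef hq
  have hPplusPD : Pplus.PosDef := hPplus ▸ hM.inv
  refine ⟨hPplusPD, ?_, ?_⟩
  · have h := hPplusPD.isHermitian
    rwa [Matrix.IsHermitian, Matrix.conjTranspose_eq_transpose_of_trivial] at h
  · have hSM : ((γ • P⁻¹ + Matrix.vecMulVec q q) - γ • P⁻¹).PosSemidef := by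
      simpa using hq
    have := inv_sub_inv_posSemidef hS hM hSM
    have hSinv : (γ • P⁻¹ : Matrix (Fin n) (Fin n) ℝ)⁻¹ = γ⁻¹ • P := by
      have : Invertible γ := invertibleOfNonzero hγ.ne'
      rw [Matrix.inv_smul (A := P⁻¹) γ hPinv.det_pos.ne'.isUnit, Matrix.nonsing_inv_nonsing_inv _ hP.det_pos.ne'.isUnit]
      congr 1
      exact invOf_eq_inv γ
    rw [hPplus, ← hSinv]
    exact this
end
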